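/- #U(𝔽₇) = 340, where U(𝔽₇) = { (x₀:…:x₅) ∈ P⁵(𝔽₇) : x₀+⋯+x₅ = 0, x₀⁻¹+⋯+x₅⁻¹ = 0, all xᵢ ≠ 0 }. -/
import Mathlib


instance : Fact (Nat.Prime 7) := ⟨by norm_num⟩

/-- The open part of the Barth–Nieto quintic in `ℙ⁵(𝔽_7)`: all coordinates nonzero,
`Σ xᵢ = 0` and `Σ xᵢ⁻¹ = 0`. -/
def barthNietoU : Set (Projectivization (ZMod 7) (Fin 6 → ZMod 7)) :=
  {x | (∀ i, x.rep i ≠ 0) ∧ (∑ i, x.rep i) = 0 ∧ (∑ i, (x.rep i)⁻¹) = 0}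

private lemma zmod7_inv (x : ZMod 7) : x⁻¹ = x ^ 5 := by
  rcases eq_or_ne x 0 with rfl | h
  · simp
  · refine inv_eq_of_mul_eq_one_right ?_
    have h6 : x ^ 6 = 1 := ZMod.pow_card_sub_one_eq_one h
    calc x * x ^ 5 = x ^ 6 := by ring
    _ = 1 := h6

private def bnCond (w : Fin 6 → ZMod 7) : Prop :=
  (∀ i, w i ≠ 0) ∧ (∑ i, w i) = 0 ∧ (∑ i, (w i)⁻¹) = 0

private instance : DecidablePred bnCond := fun w => by
  unfold bnCond; simp only [zmod7_inv]; infer_instance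

private lemma bnCond_smul (c : ZMod 7) (hc : c ≠ 0) (v : Fin 6 → ZMod 7) :
    bnCond (c • v) ↔ bnCond v := by
  unfold bnCond
  simp only [Pi.smul_apply, smul_eq_mul, mul_inv, ← Finset.mul_sum, mul_ne_zero_iff,
    mul_eq_zero, inv_eq_zero]
  constructor
  · rintro ⟨h1, h2, h3⟩
    exact ⟨fun i => (h1 i).2, h2.resolve_left hc, h3.resolve_left hc⟩
  · rintro ⟨h1, h2, h3⟩
    exact ⟨fun i => ⟨hc, h1 i⟩, Or.inr h2, Or.inr h3⟩

private abbrev T : Type := ZMod 7 × ZMod 7 × ZMod 7 × ZMod 7 × ZMod 7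

private def vec (t : T) : Fin 6 → ZMod 7 :=
  ![1, t.1, t.2.1, t.2.2.1, t.2.2.2.1, t.2.2.2.2]

private lemma vec_ne_zero (t : T) : vec t ≠ 0 := by
  intro h
  simpa [vec] using congrFun h 0

private def P (t : T) : Prop := bnCond (vec t)

private instance : DecidablePred P := fun t => by unfold P; infer_instance

private noncomputable def bnF (t : T) : Projectivization (ZMod 7) (Fin 6 → ZMod 7) :=
  Projectivization.mk (ZMod 7) (vec t) (vec_ne_zero t)

private lemma bnF_mem_iff (t : T) : bnF t ∈ barthNietoU ↔ P t := by
  obtain ⟨a, ha⟩ := (Projectivization.mk_eq_mk_iff (ZMod 7) _ _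
    (Projectivization.rep_nonzero _) (vec_ne_zero t)).mp (Projectivization.mk_rep (bnF t))
  have : (bnF t ∈ barthNietoU) ↔ bnCond ((a : ZMod 7) • vec t) := by
    rw [show (a : ZMod 7) • vec t = (bnF t).rep from ha]
    exact Iff.rfl
  rw [this, bnCond_smul _ a.ne_zero]
  exact Iff.rfl

private lemma bnF_injOn : Set.InjOn bnF {t | P t} := by
  intro t _ s _ h
  obtain ⟨a, ha⟩ := (Projectivization.mk_eq_mk_iff (ZMod 7) _ _ (vec_ne_zero t)
    (vec_ne_zero s)).mp h
  have ha' : (a : ZMod 7) • vec s = vec t := ha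
  have h0 : (a : ZMod 7) * 1 = 1 := congrFun ha' 0
  rw [mul_one] at h0
  rw [h0, one_smul] at ha'
  have h1 : s.1 = t.1 := congrFun ha' 1
  have h2 : s.2.1 = t.2.1 := congrFun ha' 2
  have h3 : s.2.2.1 = t.2.2.1 := congrFun ha' 3
  have h4 : s.2.2.2.1 = t.2.2.2.1 := congrFun ha' 4
  have h5 : s.2.2.2.2 = t.2.2.2.2 := congrFun ha' 5
  obtain ⟨t1, t2, t3, t4, t5⟩ := t
  obtain ⟨s1, s2, s3, s4, s5⟩ := s
  simp_all

private lemma bnF_surjOn : Set.SurjOn bnF {t | P t} barthNietoU := by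
  intro x hx
  have hc : bnCond x.rep := hx
  have h0 : x.rep 0 ≠ 0 := hc.1 0
  set u : Fin 6 → ZMod 7 := (x.rep 0)⁻¹ • x.rep with hu
  have hu0 : u 0 = 1 := by simp [hu, inv_mul_cancel₀ h0]
  have hcu : bnCond u := (bnCond_smul _ (inv_ne_zero h0) _).mpr hc
  have hvec : vec (u 1, u 2, u 3, u 4, u 5) = u := by
    funext i
    fin_cases i
    · exact hu0.symm
    all_goals rfl
  refine ⟨(u 1, u 2, u 3, u 4, u 5), ?_, ?_⟩
  · show bnCond (vec _)
    rw [hvec]; exact hcu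
  · have hne : u ≠ 0 := by rw [← hvec]; exact vec_ne_zero _
    have : bnF (u 1, u 2, u 3, u 4, u 5) = Projectivization.mk (ZMod 7) u hne := by
      unfold bnF
      congr 1
    rw [this, ← Projectivization.mk_rep x]
    apply (Projectivization.mk_eq_mk_iff (ZMod 7) _ _ _ _).mpr
    exact ⟨Units.mk0 _ (inv_ne_zero h0), rfl⟩

set_option maxRecDepth 10000 in
set_option maxHeartbeats 4000000 in
private lemma card_P : {t | P t}.ncard = 340 := by
  have hset : {t | P t} = ↑(Finset.univ.filter P) := by
    ext t; simp
  rw [hset, Set.ncard_coe_finset, Finset.card_filter]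
  simp only [Fintype.sum_prod_type]
  simp only [P, bnCond, vec, zmod7_inv, Fin.sum_univ_succ, Fin.forall_fin_succ,
    Matrix.cons_val_zero, Matrix.cons_val_succ, Fin.sum_univ_zero, add_zero,
    one_ne_zero, not_false_iff, true_and, ne_eq, IsEmpty.forall_iff, and_true, one_pow]
  decide

/-- `#U(𝔽_7) = 340`. -/
theorem card_barthNietoU : barthNietoU.ncard = 340 := by
  have hbij : Set.BijOn bnF {t | P t} barthNietoU :=
    ⟨fun t ht => (bnF_mem_iff t).mpr ht, bnF_injOn, bnF_surjOn⟩
  rw [← hbij.image_eq, Set.ncard_image_of_injOn bnF_injOn, card_P]
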